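/- Let (X,b) be a weighted graph and V : X → ℝ such that the quadratic form q_V is nonnegative on C_c(X). Let h ∈ C_c(X) be nonnegative (real-valued) with q_V(h) = 0. Then for every φ ∈ C_c(X) one has q_V(φ·1_{{h>0}}) ≤ q_V(φ), where 1_{{h>0}} is the indicator function of the set {x : h(x) > 0}. -/

import Mathlib

/-- The quadratic form `q_V(f) = (1/2)∑_{x,y} b(x,y)|f x - f y|² + ∑_x V(x)|f x|²`
associated with a weighted graph `b` and a potential `V`. -/
noncomputable def qForm {X : Type*} (b : X → X → ℝ) (V : X → ℝ) (f : X → ℂ) : ℝ :=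
  (1 / 2) * ∑' x, ∑' y, b x y * ‖f x - f y‖ ^ 2 + ∑' x, V x * ‖f x‖ ^ 2

section Aux

variable {X : Type*} (b : X → X → ℝ)

private lemma sq_norm_sub_le' (a c : ℂ) : ‖a - c‖^2 ≤ 2*‖a‖^2 + 2*‖c‖^2 := by
  have h := norm_sub_le a c
  nlinarith [sq_nonneg (‖a‖ - ‖c‖), norm_nonneg a, norm_nonneg c, norm_nonneg (a-c)]

private lemma summable_inner' (hbnn : ∀ x y, 0 ≤ b x y)
    (hdeg : ∀ x, Summable fun y => b x y)
    (f : X → ℂ) (hf : {x | f x ≠ 0}.Finite) (x : X) :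
    Summable fun y => b x y * ‖f x - f y‖^2 := by
  have h2 : Summable fun y => 2 * (b x y * ‖f y‖^2) := by
    apply summable_of_finite_support
    apply hf.subset
    intro y hy
    simp only [Function.mem_support] at hy
    simp only [Set.mem_setOf_eq]
    intro h0
    apply hy
    simp [h0]
  have hsum : Summable fun y => 2*‖f x‖^2 * b x y + 2 * (b x y * ‖f y‖^2) :=
    ((hdeg x).mul_left _).add h2
  refine hsum.of_nonneg_of_le (fun y => by have := hbnn x y; positivity) (fun y => ?_)
  have := sq_norm_sub_le' (f x) (f y)
  nlinarith [hbnn x y, norm_nonneg (f x - f y), sq_nonneg ‖f x - f y‖]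

private lemma summable_outer' (hbnn : ∀ x y, 0 ≤ b x y) (hsym : ∀ x y, b x y = b y x)
    (hdeg : ∀ x, Summable fun y => b x y)
    (f : X → ℂ) (hf : {x | f x ≠ 0}.Finite) :
    Summable fun x => ∑' y, b x y * ‖f x - f y‖^2 := by
  classical
  set s := hf.toFinset with hs
  have hG : Summable fun x => 2*‖f x‖^2 * (∑' y, b x y) + ∑ y ∈ s, 2 * (b x y * ‖f y‖^2) := by
    apply Summable.add
    · apply summable_of_finite_support
      apply hf.subset
      intro x hx
      simp only [Function.mem_support] at hx
      simp only [Set.mem_setOf_eq]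
      intro h0
      apply hx
      simp [h0]
    · apply summable_sum
      intro y _
      have : Summable fun x => b x y := by
        refine (hdeg y).congr fun x => ?_
        exact (hsym x y).symm ▸ rfl
      exact (this.mul_right _).mul_left 2
  refine hG.of_nonneg_of_le (fun x => tsum_nonneg fun y => by have := hbnn x y; positivity)
    (fun x => ?_)
  have hb1 : Summable fun y => 2*‖f x‖^2 * b x y := (hdeg x).mul_left _
  have hb2 : Summable fun y => 2 * (b x y * ‖f y‖^2) := by
    apply summable_of_finite_support
    apply hf.subset
    intro y hy
    simp only [Function.mem_support] at hy
    simp only [Set.mem_setOf_eq]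
    intro h0; apply hy; simp [h0]
  have hle : ∑' y, b x y * ‖f x - f y‖^2 ≤ ∑' y, (2*‖f x‖^2 * b x y + 2 * (b x y * ‖f y‖^2)) := by
    apply Summable.tsum_le_tsum _ (summable_inner' b hbnn hdeg f hf x) (hb1.add hb2)
    intro y
    have := sq_norm_sub_le' (f x) (f y)
    nlinarith [hbnn x y, sq_nonneg ‖f x - f y‖]
  calc ∑' y, b x y * ‖f x - f y‖^2 ≤ _ := hle
    _ = 2*‖f x‖^2 * (∑' y, b x y) + ∑ y ∈ s, 2 * (b x y * ‖f y‖^2) := by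
        have h2eq : ∑' y, 2 * (b x y * ‖f y‖^2) = ∑ y ∈ s, 2*(b x y*‖f y‖^2) := by
          apply tsum_eq_sum
          intro y hy
          have : f y = 0 := by
            by_contra h0
            exact hy (hf.mem_toFinset.mpr h0)
          simp [this]
        rw [Summable.tsum_add hb1 hb2, tsum_mul_left, h2eq]

private lemma norm_cast_sub_sq (a c : ℝ) : ‖((a:ℂ) - (c:ℂ))‖^2 = (a - c)^2 := by
  rw [← Complex.ofReal_sub, Complex.norm_real, Real.norm_eq_abs, sq_abs]

private lemma norm_cast_sq (a : ℝ) : ‖(a:ℂ)‖^2 = a^2 := by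
  rw [Complex.norm_real, Real.norm_eq_abs, sq_abs]

private lemma summable_inner_r (hbnn : ∀ x y, 0 ≤ b x y)
    (hdeg : ∀ x, Summable fun y => b x y)
    (u : X → ℝ) (hu : {x | u x ≠ 0}.Finite) (x : X) :
    Summable fun y => b x y * (u x - u y)^2 := by
  have h := summable_inner' b hbnn hdeg (fun z => (u z : ℂ)) (by simpa using hu) x
  refine h.congr fun y => ?_
  rw [norm_cast_sub_sq]

private lemma summable_outer_r (hbnn : ∀ x y, 0 ≤ b x y) (hsym : ∀ x y, b x y = b y x)
    (hdeg : ∀ x, Summable fun y => b x y)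
    (u : X → ℝ) (hu : {x | u x ≠ 0}.Finite) :
    Summable fun x => ∑' y, b x y * (u x - u y)^2 := by
  have h := summable_outer' b hbnn hsym hdeg (fun z => (u z : ℂ)) (by simpa using hu)
  refine h.congr fun x => ?_
  exact tsum_congr fun y => by rw [norm_cast_sub_sq]

private lemma qForm_real (V : X → ℝ) (u : X → ℝ) :
    qForm b V (fun x => (u x : ℂ)) =
      (1/2) * ∑' x, ∑' y, b x y * (u x - u y)^2 + ∑' x, V x * (u x)^2 := by
  unfold qForm
  congr 1
  · congr 1
    exact tsum_congr fun x => tsum_congr fun y => by rw [norm_cast_sub_sq]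
  · exact tsum_congr fun x => by rw [norm_cast_sq]

/-- Key lemma: the weight vanishes on edges between `{h > 0}` and `{h = 0}`. -/
private lemma key_edge
    (hb0 : ∀ x, b x x = 0)
    (hbnn : ∀ x y, 0 ≤ b x y)
    (hsym : ∀ x y, b x y = b y x)
    (hdeg : ∀ x, Summable fun y => b x y)
    (V : X → ℝ)
    (hq : ∀ f : X → ℂ, {x | f x ≠ 0}.Finite → 0 ≤ qForm b V f)
    (h : X → ℝ) (hpos : ∀ x, 0 ≤ h x) (hfin : {x | h x ≠ 0}.Finite)
    (hzero : qForm b V (fun x => (h x : ℂ)) = 0)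
    (x0 y0 : X) (hx0 : 0 < h x0) (hy0 : h y0 = 0) : b x0 y0 = 0 := by
  classical
  set δ : X → ℝ := fun x => if x = y0 then (1:ℝ) else 0 with hδdef
  have hδfin : {x | δ x ≠ 0}.Finite := by
    apply (Set.finite_singleton y0).subset
    intro x hx
    simp only [Set.mem_setOf_eq, hδdef] at hx
    by_contra hne
    exact hx (if_neg hne)
  have hδy0 : δ y0 = 1 := if_pos rfl
  have hδne : ∀ x, x ≠ y0 → δ x = 0 := fun x hx => if_neg hx
  have hhδ : ∀ x, h x * δ x = 0 := by
    intro x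
    by_cases hx : x = y0
    · subst hx; rw [hy0]; ring
    · rw [hδne x hx]; ring
  set D : ℝ := ∑' x, b y0 x * h x with hDdef
  have hDs : Summable fun x => b y0 x * h x := by
    apply summable_of_finite_support
    apply hfin.subset
    intro x hx
    simp only [Function.mem_support] at hx
    simp only [Set.mem_setOf_eq]
    intro h0; apply hx; simp [h0]
  have hDnn : 0 ≤ D := tsum_nonneg fun x => mul_nonneg (hbnn _ _) (hpos x)
  -- the cross term in the inner sums
  have hBsupp : ∀ x y, h y = 0 → y ≠ y0 → b x y * ((h x - h y) * (δ x - δ y)) = 0 := by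
    intro x y hhy hyne
    rw [hδne y hyne, hhy]
    by_cases hx : x = y0
    · subst hx; rw [hy0]; ring
    · rw [hδne x hx]; ring
  have hB : ∀ x, Summable fun y => b x y * ((h x - h y) * (δ x - δ y)) := by
    intro x
    apply summable_of_finite_support
    apply (hfin.union (Set.finite_singleton y0)).subset
    intro y hy
    simp only [Function.mem_support] at hy
    by_contra hmem
    simp only [Set.mem_union, Set.mem_setOf_eq, Set.mem_singleton_iff, not_or] at hmem
    exact hy (hBsupp x y (not_not.mp hmem.1) hmem.2)
  -- value of the inner cross sums
  have hBval : ∀ x, (∑' y, b x y * ((h x - h y) * (δ x - δ y)))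
      = -(b y0 x * h x) + (if x = y0 then -D else 0) := by
    intro x
    by_cases hx : x = y0
    · rw [hx, if_pos rfl]
      have hcong : ∀ y, b y0 y * ((h y0 - h y) * (δ y0 - δ y)) = -(b y0 y * h y) := by
        intro y
        by_cases hyy : y = y0
        · rw [hyy, hb0 y0]; ring
        · rw [hδne y hyy, hδy0, hy0]; ring
      rw [tsum_congr hcong, tsum_neg, ← hDdef, hb0 y0]
      ring
    · rw [if_neg hx]
      have hz := tsum_eq_single (L := SummationFilter.unconditional X) (f := fun y => b x y * ((h x - h y) * (δ x - δ y))) y0 ?_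
      · rw [hz]
        simp only [hδy0, hδne x hx, hy0, hsym x y0]
        ring
      · intro y hyne
        simp only [hδne x hx, hδne y hyne]
        ring
  have hBo : Summable fun x => ∑' y, b x y * ((h x - h y) * (δ x - δ y)) := by
    apply summable_of_finite_support
    apply ((hfin.union (Set.finite_singleton y0)).subset)
    intro x hx
    simp only [Function.mem_support, hBval] at hx
    by_contra hmem
    simp only [Set.mem_union, Set.mem_setOf_eq, Set.mem_singleton_iff, not_or] at hmem
    apply hx
    rw [if_neg hmem.2, not_not.mp hmem.1]
    ring
  -- total cross term
  have hTB : (∑' x, ∑' y, b x y * ((h x - h y) * (δ x - δ y))) = -2 * D := by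
    have h1 : Summable fun x => -(b y0 x * h x) := hDs.neg
    have h2 : Summable fun x => (if x = y0 then -D else 0) := by
      apply summable_of_finite_support
      apply (Set.finite_singleton y0).subset
      intro x hx
      simp only [Function.mem_support] at hx
      by_contra hne
      exact hx (if_neg hne)
    calc (∑' x, ∑' y, b x y * ((h x - h y) * (δ x - δ y)))
        = ∑' x, (-(b y0 x * h x) + (if x = y0 then -D else 0)) := tsum_congr hBval
      _ = (∑' x, -(b y0 x * h x)) + ∑' x, (if x = y0 then -D else 0) := Summable.tsum_add h1 h2
      _ = -D + -D := by rw [tsum_neg, ← hDdef, tsum_ite_eq]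
      _ = -2 * D := by ring
  -- the perturbation estimate
  have hstep : ∀ t : ℝ, 0 < t → 2 * D ≤ t * qForm b V (fun x => (δ x : ℂ)) := by
    intro t ht
    set ft : X → ℂ := fun x => ((h x + t * δ x : ℝ) : ℂ) with hftdef
    have hftfin : {x | ft x ≠ 0}.Finite := by
      apply (hfin.union (Set.finite_singleton y0)).subset
      intro x hx
      simp only [Set.mem_setOf_eq, hftdef] at hx
      by_contra hmem
      simp only [Set.mem_union, Set.mem_setOf_eq, Set.mem_singleton_iff, not_or] at hmem
      apply hx
      rw [not_not.mp hmem.1, hδne x hmem.2]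
      norm_num
    have hA : ∀ x, Summable fun y => b x y * (h x - h y)^2 :=
      summable_inner_r b hbnn hdeg h hfin
    have hC : ∀ x, Summable fun y => b x y * (δ x - δ y)^2 :=
      summable_inner_r b hbnn hdeg δ hδfin
    have hAo : Summable fun x => ∑' y, b x y * (h x - h y)^2 :=
      summable_outer_r b hbnn hsym hdeg h hfin
    have hCo : Summable fun x => ∑' y, b x y * (δ x - δ y)^2 :=
      summable_outer_r b hbnn hsym hdeg δ hδfin
    -- inner expansion
    have hinner : ∀ x, (∑' y, b x y * ‖ft x - ft y‖^2)
        = (∑' y, b x y * (h x - h y)^2)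
          + ((2*t) * (∑' y, b x y * ((h x - h y) * (δ x - δ y)))
            + t^2 * (∑' y, b x y * (δ x - δ y)^2)) := by
      intro x
      have hpt : ∀ y, b x y * ‖ft x - ft y‖^2
          = b x y * (h x - h y)^2
            + ((2*t) * (b x y * ((h x - h y) * (δ x - δ y)))
              + t^2 * (b x y * (δ x - δ y)^2)) := by
        intro y
        simp only [hftdef]
        rw [norm_cast_sub_sq]
        ring
      rw [tsum_congr hpt, Summable.tsum_add (hA x) (((hB x).mul_left _).add ((hC x).mul_left _)),
        Summable.tsum_add ((hB x).mul_left _) ((hC x).mul_left _), tsum_mul_left, tsum_mul_left]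
    -- outer expansion
    have houter : (∑' x, ∑' y, b x y * ‖ft x - ft y‖^2)
        = (∑' x, ∑' y, b x y * (h x - h y)^2)
          + ((2*t) * (∑' x, ∑' y, b x y * ((h x - h y) * (δ x - δ y)))
            + t^2 * (∑' x, ∑' y, b x y * (δ x - δ y)^2)) := by
      rw [tsum_congr hinner, Summable.tsum_add hAo ((hBo.mul_left _).add (hCo.mul_left _)),
        Summable.tsum_add (hBo.mul_left _) (hCo.mul_left _), tsum_mul_left, tsum_mul_left]
    -- potential part
    have hVh : Summable fun x => V x * (h x)^2 := by
      apply summable_of_finite_support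
      apply hfin.subset
      intro x hx
      simp only [Function.mem_support] at hx
      simp only [Set.mem_setOf_eq]
      intro h0; apply hx; simp [h0]
    have hVδ : Summable fun x => t^2 * (V x * (δ x)^2) := by
      apply summable_of_finite_support
      apply hδfin.subset
      intro x hx
      simp only [Function.mem_support] at hx
      simp only [Set.mem_setOf_eq]
      intro h0; apply hx; simp [h0]
    have hVpart : (∑' x, V x * ‖ft x‖^2)
        = (∑' x, V x * (h x)^2) + t^2 * (∑' x, V x * (δ x)^2) := by
      have hpt : ∀ x, V x * ‖ft x‖^2 = V x * (h x)^2 + t^2 * (V x * (δ x)^2) := by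
        intro x
        simp only [hftdef]
        rw [norm_cast_sq]
        linear_combination (2*t*V x) * hhδ x
      rw [tsum_congr hpt, Summable.tsum_add hVh hVδ, tsum_mul_left]
    -- assemble
    have hqft : qForm b V ft = qForm b V (fun x => (h x : ℂ)) + t * (-2 * D)
        + t^2 * qForm b V (fun x => (δ x : ℂ)) := by
      rw [qForm_real b V δ, qForm_real b V h]
      unfold qForm
      rw [houter, hVpart, hTB]
      ring
    have hqnn := hq ft hftfin
    rw [hqft, hzero] at hqnn
    have h1 : t * (2 * D) ≤ t * (t * qForm b V (fun x => (δ x : ℂ))) := by nlinarith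
    exact le_of_mul_le_mul_left h1 ht
  -- conclude D ≤ 0, hence D = 0
  have hD0 : D ≤ 0 := by
    by_contra hc
    push_neg at hc
    rcases le_or_gt (qForm b V (fun x => (δ x : ℂ))) 0 with hq1 | hq1
    · have := hstep 1 one_pos
      nlinarith
    · have := hstep (D / qForm b V (fun x => (δ x : ℂ))) (div_pos hc hq1)
      rw [div_mul_cancel₀ _ (ne_of_gt hq1)] at this
      linarith
  have hDeq : D = 0 := le_antisymm hD0 hDnn
  have hterm : b y0 x0 * h x0 ≤ D :=
    Summable.le_tsum hDs x0 fun j _ => mul_nonneg (hbnn _ _) (hpos j)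
  have hterm0 : b y0 x0 * h x0 = 0 :=
    le_antisymm (hDeq ▸ hterm) (mul_nonneg (hbnn _ _) (hpos _))
  have : b y0 x0 = 0 := by
    rcases mul_eq_zero.mp hterm0 with h' | h'
    · exact h'
    · exact absurd h' (ne_of_gt hx0)
  rw [hsym x0 y0]
  exact this

end Aux

/-- **Cutting off along the zero set of a null vector of `q_V`.**
Let `(X,b)` be a weighted graph and `V : X → ℝ` such that the quadratic form `q_V` is
nonnegative on `C_c(X)`.  Let `h ∈ C_c(X)` be nonnegative real-valued with `q_V(h) = 0`.
Then for every `φ ∈ C_c(X)` we have `q_V(φ·1_{{h>0}}) ≤ q_V(φ)`. -/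
theorem qForm_indicator_le
    {X : Type*} [Countable X]
    (b : X → X → ℝ)
    (hb0 : ∀ x, b x x = 0)
    (hbnn : ∀ x y, 0 ≤ b x y)
    (hsym : ∀ x y, b x y = b y x)
    (hdeg : ∀ x, Summable fun y => b x y)
    (V : X → ℝ)
    (hq : ∀ f : X → ℂ, {x | f x ≠ 0}.Finite → 0 ≤ qForm b V f)
    (h : X → ℝ) (hpos : ∀ x, 0 ≤ h x) (hfin : {x | h x ≠ 0}.Finite)
    (hzero : qForm b V (fun x => (h x : ℂ)) = 0)
    (φ : X → ℂ) (hφ : {x | φ x ≠ 0}.Finite) :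
    qForm b V (fun x => if 0 < h x then φ x else 0) ≤ qForm b V φ := by
  classical
  set f : X → ℂ := fun x => if 0 < h x then φ x else 0 with hfdef
  set g : X → ℂ := fun x => if 0 < h x then 0 else φ x with hgdef
  have hffin : {x | f x ≠ 0}.Finite := by
    apply hφ.subset
    intro x hx
    simp only [Set.mem_setOf_eq, hfdef] at hx ⊢
    intro h0
    apply hx
    simp [h0]
  have hgfin : {x | g x ≠ 0}.Finite := by
    apply hφ.subset
    intro x hx
    simp only [Set.mem_setOf_eq, hgdef] at hx ⊢
    intro h0
    apply hx
    simp [h0]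
  have hedge : ∀ x y, 0 < h x → ¬ 0 < h y → b x y = 0 := by
    intro x y hx hy
    have hy0 : h y = 0 := le_antisymm (not_lt.mp hy) (hpos y)
    exact key_edge b hb0 hbnn hsym hdeg V hq h hpos hfin hzero x y hx hy0
  have hpt : ∀ x y, b x y * ‖φ x - φ y‖^2
      = b x y * ‖f x - f y‖^2 + b x y * ‖g x - g y‖^2 := by
    intro x y
    by_cases hx : 0 < h x <;> by_cases hy : 0 < h y
    · simp [hfdef, hgdef, hx, hy]
    · rw [hedge x y hx hy]; ring
    · rw [hsym x y, hedge y x hy hx]; ring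
    · simp [hfdef, hgdef, hx, hy]
  have hVpt : ∀ x, V x * ‖φ x‖^2 = V x * ‖f x‖^2 + V x * ‖g x‖^2 := by
    intro x
    by_cases hx : 0 < h x <;> simp [hfdef, hgdef, hx]
  have hsplit : qForm b V φ = qForm b V f + qForm b V g := by
    unfold qForm
    have hinner : ∀ x, (∑' y, b x y * ‖φ x - φ y‖^2)
        = (∑' y, b x y * ‖f x - f y‖^2) + (∑' y, b x y * ‖g x - g y‖^2) := by
      intro x
      rw [tsum_congr (hpt x),
        Summable.tsum_add (summable_inner' b hbnn hdeg f hffin x) (summable_inner' b hbnn hdeg g hgfin x)]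
    have houter : (∑' x, ∑' y, b x y * ‖φ x - φ y‖^2)
        = (∑' x, ∑' y, b x y * ‖f x - f y‖^2) + (∑' x, ∑' y, b x y * ‖g x - g y‖^2) := by
      rw [tsum_congr hinner,
        Summable.tsum_add (summable_outer' b hbnn hsym hdeg f hffin) (summable_outer' b hbnn hsym hdeg g hgfin)]
    have hVf : Summable fun x => V x * ‖f x‖^2 := by
      apply summable_of_finite_support
      apply hffin.subset
      intro x hx
      simp only [Function.mem_support] at hx
      simp only [Set.mem_setOf_eq]
      intro h0; apply hx; simp [h0]
    have hVg : Summable fun x => V x * ‖g x‖^2 := by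
      apply summable_of_finite_support
      apply hgfin.subset
      intro x hx
      simp only [Function.mem_support] at hx
      simp only [Set.mem_setOf_eq]
      intro h0; apply hx; simp [h0]
    have hVsp : (∑' x, V x * ‖φ x‖^2)
        = (∑' x, V x * ‖f x‖^2) + ∑' x, V x * ‖g x‖^2 := by
      rw [tsum_congr hVpt, Summable.tsum_add hVf hVg]
    rw [houter, hVsp]
    ring
  have hgq := hq g hgfin
  calc qForm b V f ≤ qForm b V f + qForm b V g := by linarith
    _ = qForm b V φ := hsplit.symm
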